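/- Let n ≥ 8 and let Z be a totally positive real 4×n matrix (all ordered maximal 4×4 minors positive). Then Δ := B² − 4AC > 0, where A := Y_{88}, B := Y_{78} + Y_{87}, C := Y_{77}, and Y_{ij} := ⟨12i*43*56j⟩ are the chain polynomials defined from the columns of Z. -/

import Mathlib

noncomputable section

/-- `⟨u₁ u₂ u₃ u₄⟩`: the determinant of the `4 × 4` real matrix with columns `u₁,u₂,u₃,u₄`. -/
def det4 (a b c d : Fin 4 → ℝ) : ℝ :=
  Matrix.det (Matrix.of fun i j => ![a, b, c, d] j i)

/-- The `i`-th column of a `4 × n` matrix. -/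
def col {n : ℕ} (Z : Matrix (Fin 4) (Fin n) ℝ) (i : Fin n) : Fin 4 → ℝ :=
  fun r => Z r i

/-- `Z` is totally positive: all ordered maximal `4 × 4` minors are positive. -/
def TotPos {n : ℕ} (Z : Matrix (Fin 4) (Fin n) ℝ) : Prop :=
  ∀ i1 i2 i3 i4 : Fin n, i1 < i2 → i2 < i3 → i3 < i4 →
    0 < det4 (col Z i1) (col Z i2) (col Z i3) (col Z i4)

/-- The chain polynomial `⟨X * Y * U⟩` for blocks `X = (x₁,x₂,x₃)`, `Y = (y₁,y₂)`,
`U = (u₁,u₂,u₃)` of sizes `(3,2,3)`: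
`Σ_{w ∈ S₂¹} sign(w)·det[x₁ x₂ x₃ y_{w(2)}]·det[y_{w(1)} u₁ u₂ u₃]`. -/
def chain323 (x1 x2 x3 y1 y2 u1 u2 u3 : Fin 4 → ℝ) : ℝ :=
  det4 x1 x2 x3 y2 * det4 y1 u1 u2 u3 - det4 x1 x2 x3 y1 * det4 y2 u1 u2 u3

/-- `Y_{ij} := ⟨12i * 43 * 56j⟩`, as a function of the eight vectors
`z₁, z₂, z₃, z₄, z₅, z₆, z_i, z_j`. -/
def Ymat (z1 z2 z3 z4 z5 z6 zi zj : Fin 4 → ℝ) : ℝ :=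
  chain323 z1 z2 zi z4 z3 z5 z6 zj

/-- `A := Y₈₈`. -/
def Aco (z1 z2 z3 z4 z5 z6 z7 z8 : Fin 4 → ℝ) : ℝ :=
  Ymat z1 z2 z3 z4 z5 z6 z8 z8

/-- `B := Y₇₈ + Y₈₇`. -/
def Bco (z1 z2 z3 z4 z5 z6 z7 z8 : Fin 4 → ℝ) : ℝ :=
  Ymat z1 z2 z3 z4 z5 z6 z7 z8 + Ymat z1 z2 z3 z4 z5 z6 z8 z7

/-- `C := Y₇₇`. -/
def Cco (z1 z2 z3 z4 z5 z6 z7 z8 : Fin 4 → ℝ) : ℝ :=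
  Ymat z1 z2 z3 z4 z5 z6 z7 z7

/-- `Δ := B² − 4AC`. -/
def Dco (z1 z2 z3 z4 z5 z6 z7 z8 : Fin 4 → ℝ) : ℝ :=
  Bco z1 z2 z3 z4 z5 z6 z7 z8 ^ 2
    - 4 * Aco z1 z2 z3 z4 z5 z6 z7 z8 * Cco z1 z2 z3 z4 z5 z6 z7 z8

lemma det4_expand (a b c d : Fin 4 → ℝ) :
    det4 a b c d =
      a 0 * (b 1 * (c 2 * d 3 - c 3 * d 2) - b 2 * (c 1 * d 3 - c 3 * d 1)
        + b 3 * (c 1 * d 2 - c 2 * d 1))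
      - a 1 * (b 0 * (c 2 * d 3 - c 3 * d 2) - b 2 * (c 0 * d 3 - c 3 * d 0)
        + b 3 * (c 0 * d 2 - c 2 * d 0))
      + a 2 * (b 0 * (c 1 * d 3 - c 3 * d 1) - b 1 * (c 0 * d 3 - c 3 * d 0)
        + b 3 * (c 0 * d 1 - c 1 * d 0))
      - a 3 * (b 0 * (c 1 * d 2 - c 2 * d 1) - b 1 * (c 0 * d 2 - c 2 * d 0)
        + b 2 * (c 0 * d 1 - c 1 * d 0)) := by
  have h : (Matrix.of fun i j => ![a, b, c, d] j i) =
      !![a 0, b 0, c 0, d 0; a 1, b 1, c 1, d 1; a 2, b 2, c 2, d 2; a 3, b 3, c 3, d 3] := by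
    ext i j
    fin_cases i <;> fin_cases j <;> simp
  rw [det4, h]
  simp [Matrix.det_succ_row_zero, Fin.sum_univ_succ, Fin.succAbove, Fin.castSucc,
    Fin.castAdd, Fin.castLE]
  ring

lemma det4_swap34 (a b c d : Fin 4 → ℝ) : det4 a b c d = -det4 a b d c := by
  simp only [det4_expand]; ring

lemma det4_lin3 (a b c d e : Fin 4 → ℝ) (s t : ℝ) :
    det4 a b (fun r => s * c r + t * d r) e
      = s * det4 a b c e + t * det4 a b d e := by
  simp only [det4_expand]; ring

lemma det4_lin4 (a b c d e : Fin 4 → ℝ) (s t : ℝ) :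
    det4 a b c (fun r => s * d r + t * e r)
      = s * det4 a b c d + t * det4 a b c e := by
  simp only [det4_expand]; ring

/-- Grassmann–Plücker relation (triple (z1,z2,v), 5-tuple (z3,z4,z5,z6,v)). -/
lemma gp7 (z1 z2 z3 z4 z5 z6 v : Fin 4 → ℝ) :
    det4 z1 z2 v z3 * det4 z4 z5 z6 v - det4 z1 z2 v z4 * det4 z3 z5 z6 v
      + det4 z1 z2 v z5 * det4 z3 z4 z6 v - det4 z1 z2 v z6 * det4 z3 z4 z5 v = 0 := by
  simp only [det4_expand]; ring

/-- Three-term Plücker relation. -/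
lemma pl3 (z1 z2 z5 z6 z7 z8 : Fin 4 → ℝ) :
    det4 z1 z2 z5 z6 * det4 z1 z2 z7 z8
      = det4 z1 z2 z5 z7 * det4 z1 z2 z6 z8 - det4 z1 z2 z5 z8 * det4 z1 z2 z6 z7 := by
  simp only [det4_expand]; ring

lemma plA (z1 z2 z3 z4 z5 z7 : Fin 4 → ℝ) :
    det4 z1 z2 z4 z7 * det4 z1 z3 z5 z7
      = det4 z1 z2 z3 z7 * det4 z1 z4 z5 z7 + det4 z1 z2 z5 z7 * det4 z1 z3 z4 z7 := by
  simp only [det4_expand]; ring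

lemma plB (z1 z3 z4 z5 z6 z7 : Fin 4 → ℝ) :
    det4 z1 z4 z5 z7 * det4 z3 z5 z6 z7
      = det4 z1 z3 z5 z7 * det4 z4 z5 z6 z7 + det4 z1 z5 z6 z7 * det4 z3 z4 z5 z7 := by
  simp only [det4_expand]; ring

lemma plC (z1 z3 z4 z5 z7 z8 : Fin 4 → ℝ) :
    det4 z1 z3 z5 z7 * det4 z3 z4 z5 z8
      = det4 z1 z3 z4 z5 * det4 z3 z5 z7 z8 + det4 z1 z3 z5 z8 * det4 z3 z4 z5 z7 := by
  simp only [det4_expand]; ring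

lemma plD (z1 z2 z3 z5 z7 z8 : Fin 4 → ℝ) :
    det4 z1 z2 z5 z7 * det4 z1 z3 z5 z8
      = det4 z1 z2 z5 z8 * det4 z1 z3 z5 z7 + det4 z1 z2 z3 z5 * det4 z1 z5 z7 z8 := by
  simp only [det4_expand]; ring

attribute [local irreducible] det4
set_option maxHeartbeats 1000000 in

theorem aux_pos (z1 z2 z3 z4 z5 z6 z7 z8 : Fin 4 → ℝ)
    (h1235 : 0 < det4 z1 z2 z3 z5) (h1237 : 0 < det4 z1 z2 z3 z7)
    (h1256 : 0 < det4 z1 z2 z5 z6) (h1257 : 0 < det4 z1 z2 z5 z7)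
    (h1278 : 0 < det4 z1 z2 z7 z8) (h1345 : 0 < det4 z1 z3 z4 z5)
    (h1347 : 0 < det4 z1 z3 z4 z7) (h1357 : 0 < det4 z1 z3 z5 z7)
    (h1567 : 0 < det4 z1 z5 z6 z7) (h1578 : 0 < det4 z1 z5 z7 z8)
    (h3457 : 0 < det4 z3 z4 z5 z7) (h3567 : 0 < det4 z3 z5 z6 z7)
    (h3578 : 0 < det4 z3 z5 z7 z8) :
    0 < (det4 z1 z2 z7 z3 * det4 z4 z5 z6 z8 - det4 z1 z2 z7 z4 * det4 z3 z5 z6 z8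
          + (det4 z1 z2 z8 z3 * det4 z4 z5 z6 z7 - det4 z1 z2 z8 z4 * det4 z3 z5 z6 z7)) ^ 2
        - 4 * (det4 z1 z2 z8 z3 * det4 z4 z5 z6 z8 - det4 z1 z2 z8 z4 * det4 z3 z5 z6 z8)
            * (det4 z1 z2 z7 z3 * det4 z4 z5 z6 z7 - det4 z1 z2 z7 z4 * det4 z3 z5 z6 z7) := by
  obtain ⟨s, hs⟩ : ∃ x : ℝ, x = det4 z1 z2 z5 z8 := ⟨_, rfl⟩
  obtain ⟨t, ht⟩ : ∃ x : ℝ, x = -det4 z1 z2 z5 z7 := ⟨_, rfl⟩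
  obtain ⟨v, hv⟩ : ∃ w : Fin 4 → ℝ, w = fun r => s * z7 r + t * z8 r := ⟨_, rfl⟩
  obtain ⟨Aq, hAq⟩ : ∃ x : ℝ, x = det4 z1 z2 z8 z3 * det4 z4 z5 z6 z8
      - det4 z1 z2 z8 z4 * det4 z3 z5 z6 z8 := ⟨_, rfl⟩
  obtain ⟨Cq, hCq⟩ : ∃ x : ℝ, x = det4 z1 z2 z7 z3 * det4 z4 z5 z6 z7
      - det4 z1 z2 z7 z4 * det4 z3 z5 z6 z7 := ⟨_, rfl⟩
  obtain ⟨Bq, hBq⟩ : ∃ x : ℝ, x = det4 z1 z2 z7 z3 * det4 z4 z5 z6 z8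
      - det4 z1 z2 z7 z4 * det4 z3 z5 z6 z8
      + (det4 z1 z2 z8 z3 * det4 z4 z5 z6 z7 - det4 z1 z2 z8 z4 * det4 z3 z5 z6 z7) := ⟨_, rfl⟩
  obtain ⟨Ep, hEp⟩ : ∃ x : ℝ, x = det4 z1 z2 z5 z7 * det4 z3 z4 z5 z8
      - det4 z1 z2 z5 z8 * det4 z3 z4 z5 z7 := ⟨_, rfl⟩
  rw [← hBq, ← hAq, ← hCq]
  -- expansions of brackets involving v
  have hv3 := det4_lin3 z1 z2 z7 z8 z3 s t
  have hv4 := det4_lin3 z1 z2 z7 z8 z4 s t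
  have hv5 := det4_lin3 z1 z2 z7 z8 z5 s t
  have hv6 := det4_lin3 z1 z2 z7 z8 z6 s t
  have hu3 := det4_lin4 z4 z5 z6 z7 z8 s t
  have hu4 := det4_lin4 z3 z5 z6 z7 z8 s t
  have hu5 := det4_lin4 z3 z4 z5 z7 z8 s t
  rw [← hv] at hv3 hv4 hv5 hv6 hu3 hu4 hu5
  -- special values
  have h0 : det4 z1 z2 v z5 = 0 := by
    rw [hv5, det4_swap34 z1 z2 z7 z5, det4_swap34 z1 z2 z8 z5, hs, ht]; ring
  have h6 : det4 z1 z2 v z6 = det4 z1 z2 z5 z6 * det4 z1 z2 z7 z8 := by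
    rw [hv6, det4_swap34 z1 z2 z7 z6, det4_swap34 z1 z2 z8 z6, hs, ht]
    linear_combination (-1 : ℝ) * pl3 z1 z2 z5 z6 z7 z8
  have h345 : det4 z3 z4 z5 v = -Ep := by
    rw [hu5, hEp, hs, ht]; ring
  -- the key quadratic value
  have hgp := gp7 z1 z2 z3 z4 z5 z6 v
  have hT : det4 z1 z2 v z3 * det4 z4 z5 z6 v - det4 z1 z2 v z4 * det4 z3 z5 z6 v
      = Cq * s ^ 2 + Bq * s * t + Aq * t ^ 2 := by
    rw [hv3, hv4, hu3, hu4, hAq, hBq, hCq]; ring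
  have hkey : Cq * s ^ 2 + Bq * s * t + Aq * t ^ 2
      = -(det4 z1 z2 z5 z6 * det4 z1 z2 z7 z8 * Ep) := by
    rw [← hT]
    have h1 : det4 z1 z2 v z3 * det4 z4 z5 z6 v - det4 z1 z2 v z4 * det4 z3 z5 z6 v
        = det4 z1 z2 v z6 * det4 z3 z4 z5 v - det4 z1 z2 v z5 * det4 z3 z4 z6 v := by
      linear_combination hgp
    rw [h1, h0, h6, h345]; ring
  -- positivity of Cq
  have hidC : Cq * det4 z1 z3 z5 z7
      = det4 z1 z2 z5 z7 * det4 z1 z3 z4 z7 * det4 z3 z5 z6 z7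
        + det4 z1 z2 z3 z7 * det4 z1 z5 z6 z7 * det4 z3 z4 z5 z7 := by
    rw [hCq, det4_swap34 z1 z2 z7 z3, det4_swap34 z1 z2 z7 z4]
    linear_combination det4 z3 z5 z6 z7 * plA z1 z2 z3 z4 z5 z7
      + det4 z1 z2 z3 z7 * plB z1 z3 z4 z5 z6 z7
  have hCpos : 0 < Cq := by
    nlinarith [hidC, h1357, mul_pos (mul_pos h1257 h1347) h3567,
      mul_pos (mul_pos h1237 h1567) h3457]
  -- positivity of Ep
  have hidE : Ep * det4 z1 z3 z5 z7
      = det4 z1 z2 z5 z7 * det4 z1 z3 z4 z5 * det4 z3 z5 z7 z8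
        + det4 z1 z2 z3 z5 * det4 z1 z5 z7 z8 * det4 z3 z4 z5 z7 := by
    rw [hEp]
    linear_combination det4 z1 z2 z5 z7 * plC z1 z3 z4 z5 z7 z8
      + det4 z3 z4 z5 z7 * plD z1 z2 z3 z5 z7 z8
  have hEpos : 0 < Ep := by
    nlinarith [hidE, h1357, mul_pos (mul_pos h1257 h1345) h3578,
      mul_pos (mul_pos h1235 h1578) h3457]
  -- conclusion
  have hW : 0 < det4 z1 z2 z5 z6 * det4 z1 z2 z7 z8 * Ep :=
    mul_pos (mul_pos h1256 h1278) hEpos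
  have ht2 : 0 < t ^ 2 := by
    have h' : t ^ 2 = det4 z1 z2 z5 z7 ^ 2 := by rw [ht]; ring
    rw [h']
    exact pow_pos h1257 2
  have h9 : 0 < (Bq ^ 2 - 4 * Aq * Cq) * t ^ 2 := by
    have hid2 : (Bq ^ 2 - 4 * Aq * Cq) * t ^ 2
        = (2 * Cq * s + Bq * t) ^ 2 - 4 * Cq * (Cq * s ^ 2 + Bq * s * t + Aq * t ^ 2) := by
      ring
    rw [hid2, hkey]
    nlinarith [sq_nonneg (2 * Cq * s + Bq * t), mul_pos hCpos hW]
  rcases mul_pos_iff.mp h9 with ⟨hx, _⟩ | ⟨_, hneg⟩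
  · exact hx
  · linarith


/-- Let `n ≥ 8` and let `Z` be a totally positive real `4 × n` matrix.
Then `Δ := B² − 4AC > 0`, where `A := Y₈₈`, `B := Y₇₈ + Y₈₇`, `C := Y₇₇`, and
`Y_{ij} := ⟨12i * 43 * 56j⟩` are the chain polynomials defined from the columns of `Z`
(1-indexed: `z_k` is the column `⟨k − 1, _⟩` of `Z`). -/
theorem four_mass_box_discriminant_pos (n : ℕ) (hn : 8 ≤ n)
    (Z : Matrix (Fin 4) (Fin n) ℝ) (hZ : TotPos Z) :
    0 < Dco (col Z ⟨0, by omega⟩) (col Z ⟨1, by omega⟩) (col Z ⟨2, by omega⟩)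
      (col Z ⟨3, by omega⟩) (col Z ⟨4, by omega⟩) (col Z ⟨5, by omega⟩)
      (col Z ⟨6, by omega⟩) (col Z ⟨7, by omega⟩) := by
  have hlt : ∀ a b : ℕ, ∀ ha : a < n, ∀ hb : b < n, a < b →
      (⟨a, ha⟩ : Fin n) < ⟨b, hb⟩ := fun _ _ _ _ h => Fin.mk_lt_mk.mpr h
  unfold Dco Bco Aco Cco Ymat chain323
  exact aux_pos (col Z ⟨0, by omega⟩) (col Z ⟨1, by omega⟩) (col Z ⟨2, by omega⟩)
    (col Z ⟨3, by omega⟩) (col Z ⟨4, by omega⟩) (col Z ⟨5, by omega⟩)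
    (col Z ⟨6, by omega⟩) (col Z ⟨7, by omega⟩)
    (hZ _ _ _ _ (hlt 0 1 _ _ (by omega)) (hlt 1 2 _ _ (by omega)) (hlt 2 4 _ _ (by omega)))
    (hZ _ _ _ _ (hlt 0 1 _ _ (by omega)) (hlt 1 2 _ _ (by omega)) (hlt 2 6 _ _ (by omega)))
    (hZ _ _ _ _ (hlt 0 1 _ _ (by omega)) (hlt 1 4 _ _ (by omega)) (hlt 4 5 _ _ (by omega)))
    (hZ _ _ _ _ (hlt 0 1 _ _ (by omega)) (hlt 1 4 _ _ (by omega)) (hlt 4 6 _ _ (by omega)))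
    (hZ _ _ _ _ (hlt 0 1 _ _ (by omega)) (hlt 1 6 _ _ (by omega)) (hlt 6 7 _ _ (by omega)))
    (hZ _ _ _ _ (hlt 0 2 _ _ (by omega)) (hlt 2 3 _ _ (by omega)) (hlt 3 4 _ _ (by omega)))
    (hZ _ _ _ _ (hlt 0 2 _ _ (by omega)) (hlt 2 3 _ _ (by omega)) (hlt 3 6 _ _ (by omega)))
    (hZ _ _ _ _ (hlt 0 2 _ _ (by omega)) (hlt 2 4 _ _ (by omega)) (hlt 4 6 _ _ (by omega)))
    (hZ _ _ _ _ (hlt 0 4 _ _ (by omega)) (hlt 4 5 _ _ (by omega)) (hlt 5 6 _ _ (by omega)))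
    (hZ _ _ _ _ (hlt 0 4 _ _ (by omega)) (hlt 4 6 _ _ (by omega)) (hlt 6 7 _ _ (by omega)))
    (hZ _ _ _ _ (hlt 2 3 _ _ (by omega)) (hlt 3 4 _ _ (by omega)) (hlt 4 6 _ _ (by omega)))
    (hZ _ _ _ _ (hlt 2 4 _ _ (by omega)) (hlt 4 5 _ _ (by omega)) (hlt 5 6 _ _ (by omega)))
    (hZ _ _ _ _ (hlt 2 4 _ _ (by omega)) (hlt 4 6 _ _ (by omega)) (hlt 6 7 _ _ (by omega)))

end
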